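/- The spherical logarithmic map inverts the spherical exponential map: on the hypersphere of curvature K > 0, if y = exp_x(v) for a nonzero tangent vector v at x with ‖v‖₂ < πR, then log_x(y) := (arccos(α)/√(1-α²))·(y - αx) with α = K⟨x,y⟩ equals v. -/

import Mathlib

/-- Exponential map on the hypersphere of radius `R`. -/
noncomputable def sphExp {n : ℕ} (R : ℝ) (x v : EuclideanSpace ℝ (Fin (n + 1))) :
    EuclideanSpace ℝ (Fin (n + 1)) :=
  Real.cos (‖v‖ / R) • x + (Real.sin (‖v‖ / R) * R / ‖v‖) • v

/-- Logarithmic map on the hypersphere of curvature `K`. -/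
noncomputable def sphLog {n : ℕ} (K : ℝ) (x y : EuclideanSpace ℝ (Fin (n + 1))) :
    EuclideanSpace ℝ (Fin (n + 1)) :=
  (Real.arccos (K * (inner ℝ x y : ℝ)) / Real.sqrt (1 - (K * (inner ℝ x y : ℝ)) ^ 2)) •
    (y - (K * (inner ℝ x y : ℝ)) • x)

/-- The spherical logarithmic map inverts the spherical exponential map. -/
theorem sphLog_sphExp {n : ℕ} (K : ℝ) (hK : 0 < K)
    (R : ℝ) (hR : R = 1 / Real.sqrt K)
    (x v : EuclideanSpace ℝ (Fin (n + 1)))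
    (hx : ‖x‖ ^ 2 = R ^ 2) (hxv : (inner ℝ x v : ℝ) = 0)
    (hv : 0 < ‖v‖) (hv' : ‖v‖ < Real.pi * R) :
    sphLog K x (sphExp R x v) = v := by
  have hRpos : 0 < R := by
    rw [hR]; positivity
  have hKR2 : K * R ^ 2 = 1 := by
    rw [hR]
    field_simp
    rw [Real.sq_sqrt hK.le]
  set θ := ‖v‖ / R with hθ
  have hθpos : 0 < θ := div_pos hv hRpos
  have hθlt : θ < Real.pi := by
    rw [hθ, div_lt_iff₀ hRpos]; linarith
  have hsin : 0 < Real.sin θ := Real.sin_pos_of_pos_of_lt_pi hθpos hθlt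
  have hinner : (inner ℝ x (sphExp R x v) : ℝ) = Real.cos θ * R ^ 2 := by
    simp only [sphExp, inner_add_right, inner_smul_right, hxv,
      real_inner_self_eq_norm_sq, hx]
    ring
  have hα : K * (inner ℝ x (sphExp R x v) : ℝ) = Real.cos θ := by
    rw [hinner]; rw [show K * (Real.cos θ * R ^ 2) = Real.cos θ * (K * R ^ 2) by ring,
      hKR2, mul_one]
  rw [sphLog, hα]
  have h1 : 1 - Real.cos θ ^ 2 = Real.sin θ ^ 2 := by
    have := Real.sin_sq_add_cos_sq θ; linarith
  rw [h1, Real.sqrt_sq hsin.le, Real.arccos_cos hθpos.le hθlt.le]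
  have hy : sphExp R x v - Real.cos θ • x = (Real.sin θ * R / ‖v‖) • v := by
    rw [sphExp]; abel
  rw [hy, smul_smul]
  have : θ / Real.sin θ * (Real.sin θ * R / ‖v‖) = 1 := by
    field_simp [hθ]
    rw [hθ]; field_simp
  rw [this, one_smul]
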